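/- If X is a non-Archimedean uniformly locally bounded space (the uniform structure has a basis of entourages E with E ∘ E = E), then the uniform structure of biconvergence on bounded sets on Autulb(X) is non-Archimedean; in particular Autulb(X) is a 0-dimensional topological group. -/

import Mathlib

open Filter Set UniformConvergence
open scoped Uniformity

section NAU

variable {α β : Type*}

/-- Non-Archimedean predicate on a uniform structure. -/
def NAU (u : UniformSpace α) : Prop :=
  ∀ E ∈ (@uniformity α u), ∃ F ∈ (@uniformity α u), F ⊆ E ∧ SetRel.comp F F = F

theorem idem_of_refl_comp {F : Set (α × α)} (hrefl : ∀ x, (x, x) ∈ F)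
    (hsub : SetRel.comp F F ⊆ F) : SetRel.comp F F = F :=
  Set.Subset.antisymm hsub fun p hp => ⟨p.1, hrefl p.1, hp⟩

theorem NAU.comap {u : UniformSpace β} (h : NAU u) (f : α → β) : NAU (u.comap f) := by
  intro E hE
  rw [uniformity_comap] at hE
  obtain ⟨V, hV, hVE⟩ := hE
  obtain ⟨F, hF, hFV, hFF⟩ := h V hV
  refine ⟨Prod.map f f ⁻¹' F, ?_, fun p hp => hVE (hFV hp), ?_⟩
  · rw [uniformity_comap]; exact Filter.preimage_mem_comap hF
  · refine idem_of_refl_comp (fun x => @refl_mem_uniformity β u _ _ hF) ?_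
    rintro ⟨x, y⟩ ⟨z, h1, h2⟩
    have : (f x, f y) ∈ SetRel.comp F F := ⟨f z, h1, h2⟩
    rwa [hFF] at this

theorem NAU.iInf {ι : Type*} {u : ι → UniformSpace α} (h : ∀ i, NAU (u i)) :
    NAU (⨅ i, u i) := by
  intro E hE
  rw [iInf_uniformity] at hE
  obtain ⟨I, hIfin, V, hV, rfl⟩ := Filter.mem_iInf.mp hE
  choose F hF hFV hFF using fun i : I => h i (V i) (hV i)
  haveI := hIfin.to_subtype
  refine ⟨⋂ i, F i, ?_, Set.iInter_mono hFV, ?_⟩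
  · rw [iInf_uniformity]
    exact Filter.iInter_mem.mpr fun i => Filter.mem_iInf_of_mem (i : ι) (hF i)
  · refine idem_of_refl_comp (fun x => Set.mem_iInter.mpr
      fun i => @refl_mem_uniformity α (u i) _ _ (hF i)) ?_
    rintro ⟨x, y⟩ ⟨z, h1, h2⟩
    refine Set.mem_iInter.mpr fun i => ?_
    have : (x, y) ∈ SetRel.comp (F i) (F i) :=
      ⟨z, Set.mem_iInter.mp h1 i, Set.mem_iInter.mp h2 i⟩
    rwa [hFF i] at this

theorem NAU.inf {u v : UniformSpace α} (hu : NAU u) (hv : NAU v) : NAU (u ⊓ v) := by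
  intro E hE
  obtain ⟨V, hV, W, hW, rfl⟩ :=
    Filter.mem_inf_iff.mp (show E ∈ 𝓤[u] ⊓ 𝓤[v] from hE)
  obtain ⟨F₁, hF₁, hF₁V, hF₁F⟩ := hu V hV
  obtain ⟨F₂, hF₂, hF₂W, hF₂F⟩ := hv W hW
  refine ⟨F₁ ∩ F₂, ?_, Set.inter_subset_inter hF₁V hF₂W, ?_⟩
  · exact (show F₁ ∩ F₂ ∈ 𝓤[u] ⊓ 𝓤[v] from Filter.mem_inf_of_inter hF₁ hF₂ subset_rfl : _)
  · refine idem_of_refl_comp (fun x =>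
      ⟨@refl_mem_uniformity α u _ _ hF₁, @refl_mem_uniformity α v _ _ hF₂⟩) ?_
    rintro ⟨x, y⟩ ⟨z, h1, h2⟩
    constructor
    · have : (x, y) ∈ SetRel.comp F₁ F₁ := ⟨z, h1.1, h2.1⟩
      rwa [hF₁F] at this
    · have : (x, y) ∈ SetRel.comp F₂ F₂ := ⟨z, h1.2, h2.2⟩
      rwa [hF₂F] at this

theorem NAU.prod {u : UniformSpace α} {v : UniformSpace β} (hu : NAU u) (hv : NAU v) :
    NAU (@instUniformSpaceProd α β u v) :=
  NAU.inf (hu.comap Prod.fst) (hv.comap Prod.snd)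

theorem NAU.uniformFun [u : UniformSpace β] (h : NAU u) :
    NAU (UniformFun.uniformSpace α β) := by
  intro E hE
  obtain ⟨V, hV, hVE⟩ := (UniformFun.hasBasis_uniformity α β).mem_iff.mp hE
  obtain ⟨F, hF, hFV, hFF⟩ := h V hV
  refine ⟨UniformFun.gen α β F, (UniformFun.hasBasis_uniformity α β).mem_of_mem hF,
    fun p hp => hVE fun x => hFV (hp x), ?_⟩
  refine idem_of_refl_comp (fun f x => refl_mem_uniformity hF) ?_
  rintro ⟨f, g⟩ ⟨k, h1, h2⟩ x
  have : (f x, g x) ∈ SetRel.comp F F := ⟨k x, h1 x, h2 x⟩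
  rwa [hFF] at this

theorem NAU.uniformOnFun [u : UniformSpace β] (h : NAU u) (𝔖 : Set (Set α)) :
    NAU (UniformOnFun.uniformSpace α β 𝔖) := by
  have heq : UniformOnFun.uniformSpace α β 𝔖 =
      ⨅ s : 𝔖, UniformSpace.comap
        (UniformFun.ofFun ∘ (s : Set α).restrict ∘ UniformOnFun.toFun 𝔖)
        (UniformFun.uniformSpace (s : Set α) β) := by
    rw [show UniformOnFun.uniformSpace α β 𝔖 =
      ⨅ (s : Set α) (_ : s ∈ 𝔖), UniformSpace.comap
        (UniformFun.ofFun ∘ s.restrict ∘ UniformOnFun.toFun 𝔖)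
        (UniformFun.uniformSpace s β) from rfl, iInf_subtype]
  rw [heq]
  exact NAU.iInf fun s => (h.uniformFun).comap _

/-- In a non-Archimedean uniform space, every point has a basis of clopen
neighbourhoods. -/
theorem NAU.clopen_nhds [u : UniformSpace α] (h : NAU u) :
    ∀ g : α, ∀ U ∈ nhds g, ∃ V ∈ nhds g, V ⊆ U ∧ IsClopen V := by
  intro g U hU
  obtain ⟨E, hE, hEU⟩ := UniformSpace.mem_nhds_iff.mp hU
  obtain ⟨F, hF, hFE, hFF⟩ := h E hE
  set G : Set (α × α) := F ∩ Prod.swap ⁻¹' F with hGdef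
  have hG : G ∈ 𝓤 α := Filter.inter_mem hF (tendsto_swap_uniformity hF)
  have hGF : G ⊆ F := Set.inter_subset_left
  have hGsymm : ∀ {x y : α}, (x, y) ∈ G → (y, x) ∈ G := fun hxy => ⟨hxy.2, hxy.1⟩
  have hGG : SetRel.comp G G ⊆ G := by
    rintro ⟨x, y⟩ ⟨z, h1, h2⟩
    constructor
    · have : (x, y) ∈ SetRel.comp F F := ⟨z, h1.1, h2.1⟩
      rwa [hFF] at this
    · have : (y, x) ∈ SetRel.comp F F := ⟨z, h2.2, h1.2⟩
      rwa [hFF] at this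
  refine ⟨UniformSpace.ball g G, UniformSpace.ball_mem_nhds g hG,
    fun x hx => hEU (hFE (hGF hx)), ?_, ?_⟩
  · rw [← isOpen_compl_iff, isOpen_iff_mem_nhds]
    intro y hy
    refine Filter.mem_of_superset (UniformSpace.ball_mem_nhds y hG) fun z hz hzV => ?_
    exact hy (hGG ⟨z, hzV, hGsymm hz⟩)
  · rw [isOpen_iff_mem_nhds]
    intro y hy
    refine Filter.mem_of_superset (UniformSpace.ball_mem_nhds y hG) fun z hz => ?_
    exact hGG ⟨y, hy, hz⟩

end NAU

/-- A bornology on `X` (paper's convention): contains singletons, closed under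
subsets, and under unions of two intersecting members. -/
structure IsBornology (X : Type*) (𝔅 : Set (Set X)) : Prop where
  singleton_mem : ∀ x : X, {x} ∈ 𝔅
  mem_of_subset : ∀ A ∈ 𝔅, ∀ B : Set X, B ⊆ A → B ∈ 𝔅
  union_mem : ∀ A ∈ 𝔅, ∀ B ∈ 𝔅, (A ∩ B).Nonempty → A ∪ B ∈ 𝔅

/-- The image `E[A] = {y | ∃ x ∈ A, (x, y) ∈ E}` of a set under an entourage. -/
def entImage {X : Type*} (E : Set (X × X)) (A : Set X) : Set X :=
  {y | ∃ x ∈ A, (x, y) ∈ E}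

/-- A uniformly locally bounded space: a uniform space with a bornology admitting
a bounded uniform entourage `E` (i.e. `E[B]` is bounded for every bounded `B`). -/
structure IsULB (X : Type*) [UniformSpace X] (𝔅 : Set (Set X)) : Prop where
  born : IsBornology X 𝔅
  bounded_entourage : ∃ E ∈ uniformity X, ∀ A ∈ 𝔅, entImage E A ∈ 𝔅

/-- An endomorphism of a uniformly locally bounded space: uniformly continuous on
every bounded set, and modest (sends bounded sets to bounded sets). -/
def IsEndo {X : Type*} [UniformSpace X] (𝔅 : Set (Set X)) (f : X → X) : Prop :=
  (∀ A ∈ 𝔅, UniformContinuous fun x : A => f x) ∧ ∀ A ∈ 𝔅, f '' A ∈ 𝔅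

theorem IsEndo.comp {X : Type*} [UniformSpace X] {𝔅 : Set (Set X)} {f g : X → X}
    (hf : IsEndo 𝔅 f) (hg : IsEndo 𝔅 g) : IsEndo 𝔅 (f ∘ g) := by
  refine ⟨fun A hA => ?_, fun A hA => ?_⟩
  · have h1 : UniformContinuous fun x : A =>
        (⟨g x, Set.mem_image_of_mem g x.2⟩ : g '' A) :=
      (hg.1 A hA).subtype_mk _
    exact (hf.1 (g '' A) (hg.2 A hA)).comp h1
  · rw [Set.image_comp]
    exact hf.2 _ (hg.2 A hA)

theorem isEndo_id {X : Type*} [UniformSpace X] {𝔅 : Set (Set X)} : IsEndo 𝔅 (id : X → X) :=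
  ⟨fun _ _ => uniformContinuous_subtype_val, fun A hA => by simpa using hA⟩

/-- The group of automorphisms of a uniformly locally bounded space: bijections `g`
such that `g` and `g⁻¹` are both modest and uniformly continuous on bounded sets. -/
def ulbAut (X : Type*) [UniformSpace X] (𝔅 : Set (Set X)) : Subgroup (Equiv.Perm X) where
  carrier := {g | IsEndo 𝔅 ⇑g ∧ IsEndo 𝔅 ⇑g.symm}
  one_mem' := ⟨isEndo_id, isEndo_id⟩
  mul_mem' := fun {a b} ha hb => ⟨ha.1.comp hb.1, hb.2.comp ha.2⟩
  inv_mem' := fun {a} ha => ⟨ha.2, ha.1⟩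

/-- The uniform structure of uniform biconvergence on bounded sets on `ulbAut X 𝔅`:
the one induced by `g ↦ (g, g⁻¹)` into `(X →ᵤ[𝔅] X) × (X →ᵤ[𝔅] X)`. -/
instance ulbAutUniformSpace (X : Type*) [UniformSpace X] (𝔅 : Set (Set X)) :
    UniformSpace ↥(ulbAut X 𝔅) :=
  UniformSpace.comap
    (fun g => (UniformOnFun.ofFun 𝔅 ⇑g.1, UniformOnFun.ofFun 𝔅 ⇑g.1.symm))
    inferInstance

/-- If `X` is a non-Archimedean uniformly locally bounded space, then the uniform
structure of biconvergence on bounded sets on `ulbAut X 𝔅` is non-Archimedean; in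
particular `ulbAut X 𝔅` is 0-dimensional. -/
theorem ulbAut_nonArchimedean {X : Type*} [UniformSpace X] {𝔅 : Set (Set X)}
    (h : IsULB X 𝔅)
    (hNA : ∀ E ∈ uniformity X, ∃ F ∈ uniformity X, F ⊆ E ∧ SetRel.comp F F = F) :
    (∀ E ∈ uniformity ↥(ulbAut X 𝔅), ∃ F ∈ uniformity ↥(ulbAut X 𝔅),
      F ⊆ E ∧ SetRel.comp F F = F) ∧
    (∀ g : ↥(ulbAut X 𝔅), ∀ U ∈ nhds g, ∃ V ∈ nhds g, V ⊆ U ∧ IsClopen V) := by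
  have hX : NAU ‹UniformSpace X› := hNA
  have hFun : NAU (UniformOnFun.uniformSpace X X 𝔅) := hX.uniformOnFun 𝔅
  have hProd : NAU (@instUniformSpaceProd (X →ᵤ[𝔅] X) (X →ᵤ[𝔅] X) _ _) := hFun.prod hFun
  have hAut : NAU (ulbAutUniformSpace X 𝔅) := hProd.comap
    (fun g : ↥(ulbAut X 𝔅) => (UniformOnFun.ofFun 𝔅 ⇑g.1, UniformOnFun.ofFun 𝔅 ⇑g.1.symm))
  exact ⟨hAut, hAut.clopen_nhds⟩
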